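/- If X is a graph-measurable random set in a separable Banach space (not necessarily closed-valued) on a complete probability space, then its pointwise closure ω ↦ cl X(ω) is a random closed set (Effros measurable), and the set of measurable selections of cl X equals the closure in probability of the set of measurable selections of X. -/

import Mathlib

open MeasureTheory MeasurableSpace Set Filter Topology ENNReal


lemma prop26_reduce {Ω X : Type*} [MeasurableSpace Ω] [TopologicalSpace X]
    [MeasurableSpace X] [BorelSpace X] [SecondCountableTopology X] {A : Set (Ω × X)}
    (hA : MeasurableSet A) :
    ∃ (g : Ω → (ℕ → Bool)) (A' : Set ((ℕ → Bool) × X)), Measurable g ∧ MeasurableSet A' ∧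
      A = {p : Ω × X | (g p.1, p.2) ∈ A'} := by
  classical
  set 𝒞 : Set (Set (Ω × X)) := {A | ∃ (g : Ω → (ℕ → Bool)) (A' : Set ((ℕ → Bool) × X)),
    Measurable g ∧ MeasurableSet A' ∧ A = {p : Ω × X | (g p.1, p.2) ∈ A'}} with h𝒞
  have hempty : (∅ : Set (Ω × X)) ∈ 𝒞 := by
    exact ⟨fun _ _ => false, ∅, measurable_const, MeasurableSet.empty, by simp⟩
  have hcompl : ∀ A ∈ 𝒞, Aᶜ ∈ 𝒞 := by
    rintro A ⟨g, A', hg, hA', rfl⟩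
    exact ⟨g, A'ᶜ, hg, hA'.compl, rfl⟩
  have hunion : ∀ f : ℕ → Set (Ω × X), (∀ i, f i ∈ 𝒞) → (⋃ i, f i) ∈ 𝒞 := by
    intro f hf
    choose g A' hg hA' hfe using hf
    set π : ℕ → (ℕ → Bool) → (ℕ → Bool) := fun i y m => y (Nat.pair i m) with hπ
    have hπc : ∀ i, Continuous (π i) := fun i => continuous_pi fun m => continuous_apply _
    refine ⟨fun ω n => g (Nat.unpair n).1 ω (Nat.unpair n).2,
      ⋃ i, (fun p : (ℕ → Bool) × X => (π i p.1, p.2)) ⁻¹' A' i, ?_, ?_, ?_⟩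
    · exact measurable_pi_iff.2 fun n => (measurable_pi_apply _).comp (hg _)
    · exact MeasurableSet.iUnion fun i =>
        (((hπc i).measurable.comp measurable_fst).prodMk measurable_snd) (hA' i)
    · ext p
      have key : ∀ i, π i (fun n => g (Nat.unpair n).1 p.1 (Nat.unpair n).2) = g i p.1 := by
        intro i; funext m; simp [hπ, Nat.unpair_pair]
      simp only [mem_iUnion, mem_setOf_eq, mem_preimage, key]
      exact exists_congr fun i => by rw [hfe i]; rfl
  have hrect : ∀ s : Set Ω, MeasurableSet s → ∀ t : Set X, MeasurableSet t → s ×ˢ t ∈ 𝒞 := by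
    intro s hs t ht
    refine ⟨fun ω _ => if ω ∈ s then true else false, {y : ℕ → Bool | y 0 = true} ×ˢ t,
      ?_, ?_, ?_⟩
    · exact measurable_pi_iff.2 fun _ => Measurable.ite hs measurable_const measurable_const
    · have : MeasurableSet ((fun y : ℕ → Bool => y 0) ⁻¹' {true}) :=
        measurable_pi_apply 0 (MeasurableSet.singleton true)
      exact this.prod ht
    · ext p; by_cases h : p.1 ∈ s <;> simp [Set.mem_prod, h]
  let m' : MeasurableSpace (Ω × X) :=
    { MeasurableSet' := fun A => A ∈ 𝒞
      measurableSet_empty := hempty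
      measurableSet_compl := hcompl
      measurableSet_iUnion := hunion }
  have hle : (Prod.instMeasurableSpace : MeasurableSpace (Ω × X)) ≤ m' := by
    rw [← generateFrom_prod]
    refine generateFrom_le ?_
    rintro _ ⟨s, hs, t, ht, rfl⟩
    exact hrect s hs t ht
  exact hle _ hA


-- choice step: enlarging one coordinate bound loses at most ε'
lemma prop26_step {Y : Type*} [TopologicalSpace Y] [MeasurableSpace Y]
    (ν : Measure Y) [IsFiniteMeasure ν] (f : (ℕ → ℕ) → Y) {ε' : ℝ≥0∞} (hε' : 0 < ε')
    (k : ℕ) (B : Set (ℕ → ℕ)) :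
    ∃ m : ℕ, ν (f '' B) ≤ ν (f '' (B ∩ {x | x k ≤ m})) + ε' := by
  have hmono : Monotone (fun m : ℕ => f '' (B ∩ {x | x k ≤ m})) := fun m₁ m₂ h =>
    image_mono (inter_subset_inter_right _ fun x (hx : x k ≤ m₁) => le_trans hx h)
  have hdir : Directed (· ⊆ ·) (fun m : ℕ => f '' (B ∩ {x | x k ≤ m})) :=
    hmono.directed_le
  have hcover : f '' B = ⋃ m : ℕ, f '' (B ∩ {x | x k ≤ m}) := by
    ext y; constructor
    · rintro ⟨x, hx, rfl⟩
      exact mem_iUnion.2 ⟨x k, ⟨x, ⟨hx, le_refl (x k)⟩, rfl⟩⟩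
    · rintro hy
      obtain ⟨m, x, hx, rfl⟩ := mem_iUnion.1 hy
      exact ⟨x, hx.1, rfl⟩
  have hsup : ν (f '' B) = ⨆ m : ℕ, ν (f '' (B ∩ {x | x k ≤ m})) := by
    rw [hcover]; exact hdir.measure_iUnion
  set b := ν (f '' B) with hb
  rcases eq_or_ne b 0 with h0 | h0
  · exact ⟨0, le_trans (le_of_eq h0) zero_le⟩
  rcases le_or_gt ε' b with hle | hlt
  · have hbt : b ≠ ⊤ := measure_ne_top ν _
    have h1 : b - ε' < b := ENNReal.sub_lt_self hbt h0 hε'.ne'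
    have h2 : b - ε' < ⨆ m, ν (f '' (B ∩ {x | x k ≤ m})) :=
      lt_of_lt_of_le h1 (le_of_eq hsup)
    obtain ⟨m, hm⟩ := lt_iSup_iff.1 h2
    refine ⟨m, ?_⟩
    exact tsub_le_iff_right.1 hm.le
  · exact ⟨0, le_trans hlt.le le_add_self⟩

lemma prop26_inner_compact {Y : Type*} [TopologicalSpace Y] [PolishSpace Y]
    [MeasurableSpace Y] [BorelSpace Y] (ν : Measure Y) [IsFiniteMeasure ν]
    {f : (ℕ → ℕ) → Y} (hf : Continuous f) {ε : ℝ≥0∞} (hε : 0 < ε) :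
    ∃ K : Set Y, IsCompact K ∧ K ⊆ Set.range f ∧ ν (Set.range f) ≤ ν K + ε := by
  classical
  letI := TopologicalSpace.upgradeIsCompletelyMetrizable Y
  have hε2 : ∀ k : ℕ, 0 < ε / 2 ^ (k + 1) := fun k =>
    ENNReal.div_pos hε.ne' (by simp [ENNReal.pow_ne_top])
  choose M hM using fun (k : ℕ) (B : Set (ℕ → ℕ)) => prop26_step ν f (hε2 k) k B
  -- recursive sequence of sets
  let E : ℕ → Set (ℕ → ℕ) := fun k => Nat.rec Set.univ (fun k Bk => Bk ∩ {x | x k ≤ M k Bk}) k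
  have hE0 : E 0 = Set.univ := rfl
  have hEsucc : ∀ k, E (k + 1) = E k ∩ {x | x k ≤ M k (E k)} := fun k => rfl
  set s : ℕ → ℕ := fun k => M k (E k) with hs
  have hEanti : Antitone E := antitone_nat_of_succ_le fun k => by
    rw [hEsucc]; exact inter_subset_left
  have hEmem : ∀ k x, x ∈ E k ↔ ∀ i < k, x i ≤ s i := by
    intro k
    induction k with
    | zero => simp [hE0]
    | succ k ih =>
      intro x
      rw [hEsucc]
      constructor
      · rintro ⟨h1, h2⟩ i hi
        rcases Nat.lt_succ_iff_lt_or_eq.1 hi with h | rfl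
        · exact (ih x).1 h1 i h
        · exact h2
      · intro h
        exact ⟨(ih x).2 fun i hi => h i (hi.trans (Nat.lt_succ_self k)),
          h k (Nat.lt_succ_self k)⟩
  -- measure estimate along the chain
  have hchain : ∀ k, ν (Set.range f) ≤ ν (f '' E k) + ε := by
    have key : ∀ k, ν (Set.range f) ≤ ν (f '' E k) + ∑ i ∈ Finset.range k, ε / 2 ^ (i + 1) := by
      intro k
      induction k with
      | zero => simp [hE0, Set.image_univ]
      | succ k ih =>
        refine ih.trans ?_
        rw [Finset.sum_range_succ, hEsucc, ← add_assoc, add_right_comm]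
        exact add_le_add_left (hM k (E k)) _
    intro k
    refine (key k).trans (add_le_add_right ?_ _)
    calc ∑ i ∈ Finset.range k, ε / 2 ^ (i + 1)
        = ∑ i ∈ Finset.range k, ε * (2 ^ (i + 1))⁻¹ := by
          simp [div_eq_mul_inv]
      _ ≤ ε := by
          rw [← Finset.mul_sum]
          nth_rewrite 2 [← mul_one ε]
          refine mul_le_mul_right ?_ ε
          have h1 : ∑ i ∈ Finset.range k, ((2 : ℝ≥0∞) ^ (i + 1))⁻¹
              ≤ ∑' i : ℕ, ((2 : ℝ≥0∞)⁻¹) ^ (i + 1) := by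
            refine le_trans (le_of_eq ?_) (ENNReal.sum_le_tsum (Finset.range k))
            refine Finset.sum_congr rfl fun i _ => ?_
            rw [ENNReal.inv_pow]
          refine h1.trans ?_
          rw [ENNReal.tsum_geometric_add_one, ENNReal.one_sub_inv_two, inv_inv]
          exact le_of_eq (ENNReal.inv_mul_cancel two_ne_zero ENNReal.ofNat_ne_top)
  -- the compact set
  set K : Set (ℕ → ℕ) := {x | ∀ i, x i ≤ s i} with hK
  have hKc : IsCompact K := by
    have hKeq : K = Set.pi Set.univ (fun i => Set.Iic (s i)) := by
      ext x; simp only [hK, Set.mem_setOf_eq, Set.mem_pi, Set.mem_univ, Set.mem_Iic,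
        forall_true_left, true_implies]
    rw [hKeq]
    exact isCompact_univ_pi fun i => (Set.finite_Iic (s i)).isCompact
  -- key inclusion
  have hincl : (⋂ k, closure (f '' E k)) ⊆ f '' K := by
    intro y hy
    have hy' : ∀ k : ℕ, ∃ x ∈ E k, dist y (f x) < 1 / (k + 1) := by
      intro k
      have hyk : y ∈ closure (f '' E k) := mem_iInter.1 hy k
      have hpos : (0:ℝ) < 1 / (k + 1) := by positivity
      obtain ⟨z, hz, hd⟩ := Metric.mem_closure_iff.1 hyk _ hpos
      obtain ⟨x, hx, rfl⟩ := hz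
      exact ⟨x, hx, hd⟩
    choose x hxE hxd using hy'
    set w : ℕ → (ℕ → ℕ) := fun k i => min (x k i) (s i) with hw
    have hwK : ∀ k, w k ∈ K := fun k i => min_le_right _ _
    obtain ⟨a, haK, φ, hφ, hconv⟩ := hKc.tendsto_subseq hwK
    have hxconv : Tendsto (fun j => x (φ j)) atTop (𝓝 a) := by
      rw [tendsto_pi_nhds] at hconv ⊢
      intro i
      refine ((hconv i).congr' ?_ : Tendsto (fun j => x (φ j) i) atTop (𝓝 (a i)))
      filter_upwards [eventually_gt_atTop i] with j hj
      have hij : i < φ j := lt_of_lt_of_le hj hφ.le_apply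
      have hxs : x (φ j) i ≤ s i := (hEmem (φ j) (x (φ j))).1 (hxE (φ j)) i hij
      show w (φ j) i = x (φ j) i
      simp [hw, min_eq_left hxs]
    have h1 : Tendsto (fun j => f (x (φ j))) atTop (𝓝 (f a)) := (hf.tendsto a).comp hxconv
    have h2 : Tendsto (fun j => f (x (φ j))) atTop (𝓝 y) := by
      rw [tendsto_iff_dist_tendsto_zero]
      refine squeeze_zero (fun j => dist_nonneg) (fun j => ?_)
        tendsto_one_div_add_atTop_nhds_zero_nat
      rw [dist_comm]
      refine le_trans (hxd (φ j)).le ?_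
      have hj1 : (j:ℝ) + 1 ≤ (φ j : ℝ) + 1 := by
        have h3 : j ≤ φ j := hφ.le_apply
        have h4 : (j:ℝ) ≤ (φ j : ℝ) := Nat.cast_le.2 h3
        linarith
      exact one_div_le_one_div_of_le (by positivity) hj1
    exact ⟨a, haK, tendsto_nhds_unique h1 h2⟩
  -- conclude
  refine ⟨f '' K, hKc.image hf, image_subset_range f K, ?_⟩
  have hanti : Antitone fun k => closure (f '' E k) := fun k l h =>
    closure_mono (image_mono (hEanti h))
  have htend : Tendsto (fun k => ν (closure (f '' E k))) atTop
      (𝓝 (ν (⋂ k, closure (f '' E k)))) :=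
    tendsto_measure_iInter_atTop (fun k => isClosed_closure.measurableSet.nullMeasurableSet)
      hanti ⟨0, measure_ne_top ν _⟩
  have hge : ∀ k, ν (Set.range f) ≤ ν (closure (f '' E k)) + ε := fun k =>
    (hchain k).trans (add_le_add_left (measure_mono subset_closure) _)
  have hfin : ν (Set.range f) ≤ ν (⋂ k, closure (f '' E k)) + ε :=
    ge_of_tendsto (htend.add tendsto_const_nhds) (Filter.Eventually.of_forall hge)
  exact hfin.trans (add_le_add_left (measure_mono hincl) _)

lemma prop26_analytic_nullMeasurableSet {Y : Type*} [TopologicalSpace Y] [PolishSpace Y]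
    [MeasurableSpace Y] [BorelSpace Y] {S : Set Y} (hS : MeasureTheory.AnalyticSet S)
    (ν : Measure Y) [IsFiniteMeasure ν] : NullMeasurableSet S ν := by
  rw [MeasureTheory.AnalyticSet] at hS
  rcases hS with rfl | ⟨f, hf, rfl⟩
  · exact MeasurableSet.empty.nullMeasurableSet
  have h : ∀ n : ℕ, ∃ K, IsCompact K ∧ K ⊆ Set.range f ∧
      ν (Set.range f) ≤ ν K + (2 : ℝ≥0∞)⁻¹ ^ n := by
    intro n
    exact prop26_inner_compact ν hf (ENNReal.pow_pos (by simp) n)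
  choose K hKc hKsub hKle using h
  set B := ⋃ n, K n with hB
  have hBm : MeasurableSet B := MeasurableSet.iUnion fun n => (hKc n).isClosed.measurableSet
  have hBsub : B ⊆ Set.range f := iUnion_subset hKsub
  have hνB : ν (Set.range f) ≤ ν B := by
    have htend : Tendsto (fun n : ℕ => ν B + (2 : ℝ≥0∞)⁻¹ ^ n) atTop (𝓝 (ν B + 0)) := by
      refine Filter.Tendsto.add tendsto_const_nhds ?_
      exact ENNReal.tendsto_pow_atTop_nhds_zero_of_lt_one (by
        simp [ENNReal.inv_lt_one])
    rw [add_zero] at htend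
    refine ge_of_tendsto htend (Filter.Eventually.of_forall fun n => ?_)
    exact (hKle n).trans (add_le_add_left (measure_mono (subset_iUnion K n)) _)
  have hνB' : ν B = ν (Set.range f) := le_antisymm (measure_mono hBsub) hνB
  set H := toMeasurable ν (Set.range f) with hH
  have hdiff : ν (H \ B) = 0 := by
    have hBH : B ⊆ H := hBsub.trans (subset_toMeasurable ν _)
    rw [measure_diff hBH hBm.nullMeasurableSet (measure_ne_top ν B),
      measure_toMeasurable, hνB', tsub_self]
  have hnull : ν (Set.range f \ B) = 0 :=
    measure_mono_null (diff_subset_diff_left (subset_toMeasurable ν _)) hdiff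
  have : Set.range f = B ∪ (Set.range f \ B) := (union_diff_cancel hBsub).symm
  rw [this]
  exact hBm.nullMeasurableSet.union (NullMeasurableSet.of_null hnull)


open Classical in
lemma prop26_find_meas {Ω : Type*} [MeasurableSpace Ω] {H : ℕ → Set Ω}
    (hH : ∀ n, MeasurableSet (H n)) :
    Measurable (fun ω => if h : ∃ n, ω ∈ H n then Nat.find h else 0) := by
  classical
  refine measurable_to_countable' fun n => ?_
  have hset : (fun ω => if h : ∃ n, ω ∈ H n then Nat.find h else 0) ⁻¹' {n} =
      (H n ∩ ⋂ m, ⋂ _ : m < n, (H m)ᶜ) ∪ (if n = 0 then ⋂ m, (H m)ᶜ else ∅) := by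
    ext ω
    simp only [mem_preimage, mem_singleton_iff, mem_union, mem_inter_iff, mem_iInter,
      mem_compl_iff]
    by_cases hex : ∃ m, ω ∈ H m
    · rw [dif_pos hex, Nat.find_eq_iff hex]
      constructor
      · rintro ⟨h1, h2⟩; exact Or.inl ⟨h1, h2⟩
      · rintro (⟨h1, h2⟩ | h0)
        · exact ⟨h1, h2⟩
        · exfalso
          rcases hex with ⟨m, hm⟩
          by_cases hn : n = 0
          · rw [if_pos hn] at h0; exact (mem_iInter.1 h0 m) hm
          · rw [if_neg hn] at h0; exact h0
    · rw [dif_neg hex]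
      push_neg at hex
      constructor
      · rintro rfl
        exact Or.inr (by rw [if_pos rfl]; exact mem_iInter.2 fun m => hex m)
      · rintro (⟨h1, _⟩ | h0)
        · exact absurd h1 (hex n)
        · by_cases hn : n = 0
          · exact hn.symm
          · rw [if_neg hn] at h0; exact absurd h0 (notMem_empty ω)
  rw [hset]
  refine MeasurableSet.union ((hH n).inter ?_) ?_
  · exact MeasurableSet.iInter fun m => MeasurableSet.iInter fun _ => (hH m).compl
  · split
    · exact MeasurableSet.iInter fun m => (hH m).compl
    · exact MeasurableSet.empty

lemma prop26_selection {Ω Z : Type*} [MeasurableSpace Ω] [MetricSpace Z] [CompleteSpace Z]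
    [TopologicalSpace.SeparableSpace Z] [Nonempty Z] [MeasurableSpace Z] [BorelSpace Z]
    (Φ : Ω → Set Z) (hcl : ∀ ω, IsClosed (Φ ω))
    (hmeas : ∀ G : Set Z, IsOpen G → MeasurableSet {ω | (Φ ω ∩ G).Nonempty}) :
    ∃ σ : Ω → Z, Measurable σ ∧ ∀ ω, (Φ ω).Nonempty → σ ω ∈ Φ ω := by
  classical
  obtain ⟨u, hu⟩ := TopologicalSpace.exists_dense_seq Z
  have hudist := Metric.denseRange_iff.1 hu
  -- recursive choice of centers
  let φ : ℕ → Ω → ℕ := fun k => Nat.rec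
    (fun ω => if h : ∃ n, (Φ ω ∩ Metric.ball (u n) ((2:ℝ)⁻¹ ^ 0)).Nonempty then Nat.find h else 0)
    (fun k prev ω => if h : ∃ n, (Φ ω ∩ Metric.ball (u n) ((2:ℝ)⁻¹ ^ (k+1)) ∩
        Metric.ball (u (prev ω)) ((2:ℝ)⁻¹ ^ k)).Nonempty then Nat.find h else 0) k
  have hφ0 : ∀ ω, φ 0 ω = if h : ∃ n, (Φ ω ∩ Metric.ball (u n) ((2:ℝ)⁻¹ ^ 0)).Nonempty then
      Nat.find h else 0 := fun ω => rfl
  have hφS : ∀ k ω, φ (k+1) ω = if h : ∃ n, (Φ ω ∩ Metric.ball (u n) ((2:ℝ)⁻¹ ^ (k+1)) ∩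
      Metric.ball (u (φ k ω)) ((2:ℝ)⁻¹ ^ k)).Nonempty then Nat.find h else 0 := fun k ω => rfl
  have hrpos : ∀ k : ℕ, (0:ℝ) < (2:ℝ)⁻¹ ^ k := fun k => by positivity
  -- invariant
  have hinv : ∀ k ω, (Φ ω).Nonempty →
      (Φ ω ∩ Metric.ball (u (φ k ω)) ((2:ℝ)⁻¹ ^ k)).Nonempty := by
    intro k
    induction k with
    | zero =>
      intro ω hne
      obtain ⟨z, hz⟩ := hne
      obtain ⟨n, hn⟩ := hudist z _ (hrpos 0)
      have hex : ∃ n, (Φ ω ∩ Metric.ball (u n) ((2:ℝ)⁻¹ ^ 0)).Nonempty :=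
        ⟨n, z, hz, Metric.mem_ball.2 hn⟩
      rw [hφ0, dif_pos hex]
      exact Nat.find_spec hex
    | succ k ih =>
      intro ω hne
      obtain ⟨z, hzΦ, hzb⟩ := ih ω hne
      have hzb' : dist z (u (φ k ω)) < (2:ℝ)⁻¹ ^ k := Metric.mem_ball.1 hzb
      set δ := min ((2:ℝ)⁻¹ ^ (k+1)) ((2:ℝ)⁻¹ ^ k - dist z (u (φ k ω))) with hδ
      have hδpos : 0 < δ := lt_min (hrpos _) (by linarith)
      obtain ⟨n, hn⟩ := hudist z _ hδpos
      have hex : ∃ n, (Φ ω ∩ Metric.ball (u n) ((2:ℝ)⁻¹ ^ (k+1)) ∩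
          Metric.ball (u (φ k ω)) ((2:ℝ)⁻¹ ^ k)).Nonempty := by
        refine ⟨n, z, ⟨hzΦ, Metric.mem_ball.2 (lt_of_lt_of_le hn (min_le_left _ _))⟩, hzb⟩
      rw [hφS, dif_pos hex]
      obtain ⟨z', hz'⟩ := Nat.find_spec hex
      exact ⟨z', hz'.1⟩
  -- chain bound
  have hchain : ∀ k ω, (Φ ω).Nonempty →
      dist (u (φ k ω)) (u (φ (k+1) ω)) ≤ 2 * (2:ℝ)⁻¹ ^ k := by
    intro k ω hne
    obtain ⟨z, hzΦ, hzb⟩ := hinv k ω hne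
    have hex : ∃ n, (Φ ω ∩ Metric.ball (u n) ((2:ℝ)⁻¹ ^ (k+1)) ∩
        Metric.ball (u (φ k ω)) ((2:ℝ)⁻¹ ^ k)).Nonempty := by
      have hzb' : dist z (u (φ k ω)) < (2:ℝ)⁻¹ ^ k := Metric.mem_ball.1 hzb
      set δ := min ((2:ℝ)⁻¹ ^ (k+1)) ((2:ℝ)⁻¹ ^ k - dist z (u (φ k ω))) with hδ
      have hδpos : 0 < δ := lt_min (hrpos _) (by linarith)
      obtain ⟨n, hn⟩ := hudist z _ hδpos
      exact ⟨n, z, ⟨hzΦ, Metric.mem_ball.2 (lt_of_lt_of_le hn (min_le_left _ _))⟩, hzb⟩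
    have hval : φ (k+1) ω = Nat.find hex := by rw [hφS, dif_pos hex]
    obtain ⟨z', ⟨hz'Φ, hz'1⟩, hz'2⟩ := Nat.find_spec hex
    rw [hval]
    have d1 : dist z' (u (Nat.find hex)) < (2:ℝ)⁻¹ ^ (k+1) := Metric.mem_ball.1 hz'1
    have d2 : dist z' (u (φ k ω)) < (2:ℝ)⁻¹ ^ k := Metric.mem_ball.1 hz'2
    have h12 : (2:ℝ)⁻¹ ^ (k+1) ≤ (2:ℝ)⁻¹ ^ k :=
      pow_le_pow_of_le_one (by norm_num) (by norm_num) (Nat.le_succ k)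
    calc dist (u (φ k ω)) (u (Nat.find hex))
        ≤ dist (u (φ k ω)) z' + dist z' (u (Nat.find hex)) := dist_triangle _ _ _
      _ ≤ (2:ℝ)⁻¹ ^ k + (2:ℝ)⁻¹ ^ k := by rw [dist_comm (u (φ k ω)) z']; linarith
      _ = 2 * (2:ℝ)⁻¹ ^ k := by ring
  -- empty case: φ k ω = 0
  have hempty : ∀ k ω, ¬(Φ ω).Nonempty → φ k ω = 0 := by
    intro k
    induction k with
    | zero =>
      intro ω hne
      rw [hφ0, dif_neg]
      rintro ⟨n, z, hz, _⟩; exact hne ⟨z, hz⟩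
    | succ k ih =>
      intro ω hne
      rw [hφS, dif_neg]
      rintro ⟨n, z, ⟨⟨hz, _⟩, _⟩⟩; exact hne ⟨z, hz⟩
  -- measurability of φ k
  have hφmeas : ∀ k, Measurable (φ k) := by
    intro k
    induction k with
    | zero =>
      exact prop26_find_meas fun n => hmeas _ Metric.isOpen_ball
    | succ k ih =>
      have : ∀ n, MeasurableSet {ω | (Φ ω ∩ Metric.ball (u n) ((2:ℝ)⁻¹ ^ (k+1)) ∩
          Metric.ball (u (φ k ω)) ((2:ℝ)⁻¹ ^ k)).Nonempty} := by
        intro n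
        have : {ω | (Φ ω ∩ Metric.ball (u n) ((2:ℝ)⁻¹ ^ (k+1)) ∩
            Metric.ball (u (φ k ω)) ((2:ℝ)⁻¹ ^ k)).Nonempty} =
            ⋃ m, ({ω | φ k ω = m} ∩ {ω | (Φ ω ∩ (Metric.ball (u n) ((2:ℝ)⁻¹ ^ (k+1)) ∩
              Metric.ball (u m) ((2:ℝ)⁻¹ ^ k))).Nonempty}) := by
          ext ω
          simp only [mem_iUnion, mem_inter_iff, mem_setOf_eq]
          constructor
          · rintro h
            exact ⟨φ k ω, rfl, by rwa [← inter_assoc]⟩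
          · rintro ⟨m, rfl, h⟩
            rwa [inter_assoc]
        rw [this]
        refine MeasurableSet.iUnion fun m => MeasurableSet.inter ?_
          (hmeas _ (Metric.isOpen_ball.inter Metric.isOpen_ball))
        exact ih (measurableSet_singleton m)
      exact prop26_find_meas this
  -- the approximating functions and their limit
  set v : ℕ → Ω → Z := fun k ω => u (φ k ω) with hv
  have hvmeas : ∀ k, Measurable (v k) := fun k => measurable_from_top.comp (hφmeas k)
  have hvconv : ∀ ω, ∃ z, Tendsto (fun k => v k ω) atTop (𝓝 z) := by
    intro ω
    by_cases hne : (Φ ω).Nonempty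
    · have hcauchy : CauchySeq (fun k => v k ω) :=
        cauchySeq_of_le_geometric (2⁻¹) 2 (by norm_num)
          (fun k => by simpa [hv] using hchain k ω hne)
      exact cauchySeq_tendsto_of_complete hcauchy
    · refine ⟨u 0, ?_⟩
      have : ∀ k, v k ω = u 0 := fun k => by rw [hv]; simp [hempty k ω hne]
      simp only [this]
      exact tendsto_const_nhds
  choose σ hσ using hvconv
  refine ⟨σ, ?_, ?_⟩
  · exact measurable_of_tendsto_metrizable hvmeas (tendsto_pi_nhds.2 hσ)
  · intro ω hne
    choose zk hzkΦ hzkb using fun k => hinv k ω hne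
    -- zk k ∈ Φ ω, dist (zk k) (v k ω) < 2⁻¹ ^ k
    have htz : Tendsto zk atTop (𝓝 (σ ω)) := by
      rw [tendsto_iff_dist_tendsto_zero]
      have hb : ∀ k, dist (zk k) (σ ω) ≤ (2:ℝ)⁻¹ ^ k + dist (v k ω) (σ ω) := by
        intro k
        have h1 : dist (zk k) (v k ω) < (2:ℝ)⁻¹ ^ k := Metric.mem_ball.1 (hzkb k)
        calc dist (zk k) (σ ω) ≤ dist (zk k) (v k ω) + dist (v k ω) (σ ω) := dist_triangle _ _ _
          _ ≤ (2:ℝ)⁻¹ ^ k + dist (v k ω) (σ ω) := by linarith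
      have hlim : Tendsto (fun k => (2:ℝ)⁻¹ ^ k + dist (v k ω) (σ ω)) atTop (𝓝 0) := by
        have h1 : Tendsto (fun k : ℕ => (2:ℝ)⁻¹ ^ k) atTop (𝓝 0) :=
          tendsto_pow_atTop_nhds_zero_of_lt_one (by norm_num) (by norm_num)
        have h2 : Tendsto (fun k => dist (v k ω) (σ ω)) atTop (𝓝 0) :=
          tendsto_iff_dist_tendsto_zero.1 (hσ ω)
        simpa using h1.add h2
      exact squeeze_zero (fun k => dist_nonneg) hb hlim
    exact (hcl ω).mem_of_tendsto htz (Filter.Eventually.of_forall hzkΦ)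

lemma prop26_preimage_analytic {Ω Y : Type*} [MeasurableSpace Ω] [TopologicalSpace Y]
    [PolishSpace Y] [MeasurableSpace Y] [BorelSpace Y]
    (P : Measure Ω) [IsFiniteMeasure P] (hPc : P.IsComplete)
    {g : Ω → Y} (hg : Measurable g) {S : Set Y} (hS : MeasureTheory.AnalyticSet S) :
    MeasurableSet (g ⁻¹' S) := by
  set ν := P.map g with hν
  haveI : IsFiniteMeasure ν := by
    constructor
    rw [hν, Measure.map_apply hg MeasurableSet.univ]
    exact measure_lt_top P _
  obtain ⟨t, htm, hst⟩ := prop26_analytic_nullMeasurableSet hS ν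
  have hnull : ν ((S \ t) ∪ (t \ S)) = 0 := by
    rw [measure_union_null_iff]
    exact ⟨ae_le_set.1 hst.le, ae_le_set.1 hst.symm.le⟩
  set N := toMeasurable ν ((S \ t) ∪ (t \ S)) with hN
  have hNm : MeasurableSet N := measurableSet_toMeasurable _ _
  have hN0 : ν N = 0 := by rw [hN, measure_toMeasurable]; exact hnull
  have hPN : P (g ⁻¹' N) = 0 := by
    rw [← Measure.map_apply hg hNm]; exact hN0
  have h1 : MeasurableSet (g ⁻¹' S \ g ⁻¹' t) := by
    refine hPc.out _ (measure_mono_null ?_ hPN)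
    intro ω hω
    exact subset_toMeasurable ν _ (Or.inl hω)
  have h2 : MeasurableSet (g ⁻¹' t \ g ⁻¹' S) := by
    refine hPc.out _ (measure_mono_null ?_ hPN)
    intro ω hω
    exact subset_toMeasurable ν _ (Or.inr hω)
  have heq : g ⁻¹' S = (g ⁻¹' t \ (g ⁻¹' t \ g ⁻¹' S)) ∪ (g ⁻¹' S \ g ⁻¹' t) := by
    ext ω
    by_cases hS' : ω ∈ g ⁻¹' S <;> by_cases ht' : ω ∈ g ⁻¹' t <;>
      simp [hS', ht']
  rw [heq]
  exact ((hg htm).diff h2).union h1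

lemma prop26_main {Ω X : Type*} [MeasurableSpace Ω] [NormedAddCommGroup X] [NormedSpace ℝ X]
    [CompleteSpace X] [TopologicalSpace.SeparableSpace X] [MeasurableSpace X] [BorelSpace X]
    (P : Measure Ω) [IsFiniteMeasure P] (hPc : P.IsComplete)
    {A : Set (Ω × X)} (hA : MeasurableSet A) :
    (∀ G : Set X, IsOpen G → MeasurableSet {ω | ({x | (ω, x) ∈ A} ∩ G).Nonempty}) ∧
    ∃ ξ : Ω → X, Measurable ξ ∧ ∀ ω, {x | (ω, x) ∈ A}.Nonempty → (ω, ξ ω) ∈ A := by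
  haveI : PolishSpace (ℕ → Bool) := {}
  obtain ⟨g, A', hg, hA', hAe⟩ := prop26_reduce hA
  have hsect : ∀ ω, {x | (ω, x) ∈ A} = {x | (g ω, x) ∈ A'} := by
    intro ω; ext x; rw [hAe]; rfl
  constructor
  · intro G hG
    have heq : {ω | ({x | (ω, x) ∈ A} ∩ G).Nonempty} =
        g ⁻¹' (Prod.fst '' (A' ∩ univ ×ˢ G)) := by
      ext ω
      simp only [hsect, mem_setOf_eq, mem_preimage, mem_image, mem_inter_iff, mem_prod,
        mem_univ, true_and]
      constructor
      · rintro ⟨x, hx1, hx2⟩; exact ⟨(g ω, x), ⟨hx1, hx2⟩, rfl⟩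
      · rintro ⟨p, ⟨hx1, hx2⟩, hyx⟩
        refine ⟨p.2, ?_, hx2⟩
        rw [← hyx]
        exact hx1
    rw [heq]
    refine prop26_preimage_analytic P hPc hg ?_
    exact MeasurableSet.analyticSet_image (hA'.inter (MeasurableSet.univ.prod hG.measurableSet))
      measurable_fst
  · have hA'an : MeasureTheory.AnalyticSet A' := hA'.analyticSet
    rw [MeasureTheory.AnalyticSet] at hA'an
    rcases hA'an with hemp | ⟨f₀, hf₀, hA'r⟩
    · refine ⟨fun _ => 0, measurable_const, fun ω ⟨x, hx⟩ => ?_⟩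
      rw [hAe] at hx
      exact absurd hx (by rw [hemp]; exact notMem_empty _)
    · letI := TopologicalSpace.upgradeIsCompletelyMetrizable (ℕ → ℕ)
      set Φ : Ω → Set (ℕ → ℕ) := fun ω => {z | (f₀ z).1 = g ω} with hΦ
      have hcl : ∀ ω, IsClosed (Φ ω) :=
        fun ω => isClosed_singleton.preimage (continuous_fst.comp hf₀)
      have hmeas : ∀ G : Set (ℕ → ℕ), IsOpen G → MeasurableSet {ω | (Φ ω ∩ G).Nonempty} := by
        intro G hG
        have heq : {ω | (Φ ω ∩ G).Nonempty} = g ⁻¹' ((fun z => (f₀ z).1) '' G) := by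
          ext ω
          simp only [hΦ, mem_setOf_eq, mem_preimage, mem_image]
          constructor
          · rintro ⟨z, hz1, hz2⟩; exact ⟨z, hz2, hz1⟩
          · rintro ⟨z, hz1, hz2⟩; exact ⟨z, hz2, hz1⟩
        rw [heq]
        exact prop26_preimage_analytic P hPc hg
          (hG.analyticSet_image (continuous_fst.comp hf₀))
      obtain ⟨σ, hσm, hσ⟩ := prop26_selection Φ hcl hmeas
      refine ⟨fun ω => (f₀ (σ ω)).2, ((continuous_snd.comp hf₀).measurable).comp hσm,
        fun ω ⟨x, hx⟩ => ?_⟩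
      rw [hAe] at hx ⊢
      have hx' : (g ω, x) ∈ A' := hx
      rw [← hA'r] at hx'
      obtain ⟨z, hz⟩ := hx'
      have hΦne : (Φ ω).Nonempty := ⟨z, by simp [hΦ, hz]⟩
      have h1 : (f₀ (σ ω)).1 = g ω := hσ ω hΦne
      have h2 : f₀ (σ ω) ∈ A' := by rw [← hA'r]; exact mem_range_self _
      show (g ω, (f₀ (σ ω)).2) ∈ A'
      rwa [← h1, Prod.mk.eta]

/-- Proposition 2.6: the pointwise closure of a graph-measurable random set is an
Effros-measurable random closed set, and its measurable selections are the closure in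
probability of the measurable selections of the original set. -/
theorem stmt3 {Ω X : Type*} [MeasurableSpace Ω] [NormedAddCommGroup X] [NormedSpace ℝ X]
    [CompleteSpace X] [TopologicalSpace.SeparableSpace X] [MeasurableSpace X] [BorelSpace X]
    (P : Measure Ω) [IsProbabilityMeasure P] (hPc : P.IsComplete)
    (C : Ω → Set X) (hC : MeasurableSet {p : Ω × X | p.2 ∈ C p.1}) :
    (∀ G : Set X, IsOpen G → MeasurableSet {ω | (closure (C ω) ∩ G).Nonempty}) ∧
    {ξ : Ω → X | Measurable ξ ∧ ∀ᵐ ω ∂P, ξ ω ∈ closure (C ω)} =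
      {γ : Ω → X | Measurable γ ∧ ∃ f : ℕ → Ω → X,
        (∀ n, Measurable (f n) ∧ ∀ᵐ ω ∂P, f n ω ∈ C ω) ∧
        TendstoInMeasure P f Filter.atTop γ} := by
  have part1 : ∀ G : Set X, IsOpen G → MeasurableSet {ω | (closure (C ω) ∩ G).Nonempty} := by
    intro G hG
    have heq : {ω | (closure (C ω) ∩ G).Nonempty} = {ω | (C ω ∩ G).Nonempty} := by
      ext ω
      constructor
      · rintro ⟨x, hxc, hxG⟩
        obtain ⟨y, hyG, hyC⟩ := _root_.mem_closure_iff.1 hxc G hG hxG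
        exact ⟨y, hyC, hyG⟩
      · rintro ⟨x, hxC, hxG⟩
        exact ⟨x, subset_closure hxC, hxG⟩
    rw [heq]
    exact (prop26_main P hPc hC).1 G hG
  refine ⟨part1, ?_⟩
  ext ξ
  simp only [Set.mem_setOf_eq]
  constructor
  · rintro ⟨hξm, hξae⟩
    refine ⟨hξm, ?_⟩
    have hAn : ∀ n : ℕ, MeasurableSet
        {p : Ω × X | p.2 ∈ C p.1 ∧ dist p.2 (ξ p.1) < 1/((n:ℝ)+1)} := by
      intro n
      have hd : Measurable fun p : Ω × X => dist p.2 (ξ p.1) :=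
        measurable_snd.dist (hξm.comp measurable_fst)
      exact hC.inter (measurableSet_lt hd measurable_const)
    have hsel := fun n => (prop26_main P hPc (hAn n)).2
    choose f hfm hfsel using hsel
    have hne : ∀ n : ℕ, ∀ ω, ξ ω ∈ closure (C ω) →
        {x | (ω, x) ∈ {p : Ω × X | p.2 ∈ C p.1 ∧ dist p.2 (ξ p.1) < 1/((n:ℝ)+1)}}.Nonempty := by
      intro n ω hω
      have hpos : (0:ℝ) < 1/((n:ℝ)+1) := by positivity
      obtain ⟨y, hyC, hyd⟩ := Metric.mem_closure_iff.1 hω _ hpos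
      exact ⟨y, hyC, by rwa [dist_comm]⟩
    refine ⟨f, fun n => ⟨hfm n, ?_⟩, ?_⟩
    · filter_upwards [hξae] with ω hω
      exact (hfsel n ω (hne n ω hω)).1
    · have haet : ∀ᵐ ω ∂P, Tendsto (fun n => f n ω) atTop (𝓝 (ξ ω)) := by
        have hall : ∀ᵐ ω ∂P, ∀ n : ℕ, dist (f n ω) (ξ ω) < 1/((n:ℝ)+1) := by
          rw [ae_all_iff]
          intro n
          filter_upwards [hξae] with ω hω
          exact (hfsel n ω (hne n ω hω)).2
        filter_upwards [hall] with ω hω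
        rw [tendsto_iff_dist_tendsto_zero]
        exact squeeze_zero (fun n => dist_nonneg) (fun n => (hω n).le)
          tendsto_one_div_add_atTop_nhds_zero_nat
      exact tendstoInMeasure_of_tendsto_ae (fun n => (hfm n).aestronglyMeasurable) haet
  · rintro ⟨hm, f, hf, htim⟩
    refine ⟨hm, ?_⟩
    obtain ⟨ns, hns, haet⟩ := htim.exists_seq_tendsto_ae
    have hmem : ∀ᵐ ω ∂P, ∀ n, f n ω ∈ C ω := ae_all_iff.2 fun n => (hf n).2
    filter_upwards [haet, hmem] with ω h1 h2
    exact mem_closure_of_tendsto h1 (Filter.Eventually.of_forall fun i => h2 (ns i))
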